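/- Let C_I > 0, q̲ ∈ (0,1) and d₁, d₂ ∈ ℝ satisfy the smooth-fit system d₁·v₁(q̲) + d₂·v₂(q̲) − C_I/ρ = μ and d₁·v₁'(q̲) + d₂·v₂'(q̲) = 0. Then necessarily d₁ = ( (1+k)/2 − q̲ )·( μ + C_I/ρ ) / ( k·(1−q̲)^{(1+k)/2}·q̲^{(1−k)/2} ) and d₂ = −( (1−k)/2 − q̲ )·( μ + C_I/ρ ) / ( k·(1−q̲)^{(1−k)/2}·q̲^{(1+k)/2} ). -/

import Mathlib

set_option autoImplicit false

lemma rpow_prod_hasDerivAt (p r x : ℝ) (hx : 0 < x) (hx1 : x < 1) :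
    HasDerivAt (fun q : ℝ => q ^ p * (1 - q) ^ r)
      (p * x ^ (p - 1) * (1 - x) ^ r - r * x ^ p * (1 - x) ^ (r - 1)) x := by
  have h1x : (0 : ℝ) < 1 - x := by linarith
  have h1 : HasDerivAt (fun q : ℝ => q ^ p) (p * x ^ (p - 1)) x :=
    Real.hasDerivAt_rpow_const (Or.inl hx.ne')
  have hs : HasDerivAt (fun q : ℝ => 1 - q) (-1) x := by
    simpa using (hasDerivAt_id x).const_sub 1
  have h2 : HasDerivAt (fun q : ℝ => (1 - q) ^ r)
      ((r * (1 - x) ^ (r - 1)) * (-1)) x :=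
    (Real.hasDerivAt_rpow_const (Or.inl h1x.ne')).comp x hs
  have : HasDerivAt (fun q : ℝ => q ^ p * (1 - q) ^ r) _ x := h1.mul h2
  convert this using 1
  ring

/-- If `(d₁, d₂)` solves the smooth-fit system
`d₁ v₁(q̲) + d₂ v₂(q̲) − C_I/ρ = μ` and `d₁ v₁'(q̲) + d₂ v₂'(q̲) = 0` at `q̲ ∈ (0,1)`,
then `d₁` and `d₂` are given by the stated closed forms. -/
theorem stmt_8 (l μ h ρ σ CI d₁ d₂ : ℝ)
    (hl : 0 < l) (hlμ : l < μ) (hμh : μ < h) (hρ : 0 < ρ) (hσ : 0 < σ)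
    (hCI : 0 < CI)
    (k : ℝ) (hk : k = Real.sqrt (1 + 8 * ρ * (σ / (h - l)) ^ 2))
    (v₁ v₂ : ℝ → ℝ)
    (hv₁ : ∀ q : ℝ, v₁ q = q ^ ((1 - k) / 2) * (1 - q) ^ ((1 + k) / 2))
    (hv₂ : ∀ q : ℝ, v₂ q = q ^ ((1 + k) / 2) * (1 - q) ^ ((1 - k) / 2))
    (ql : ℝ) (hql : ql ∈ Set.Ioo (0 : ℝ) 1)
    (hfit1 : d₁ * v₁ ql + d₂ * v₂ ql - CI / ρ = μ)
    (hfit2 : d₁ * deriv v₁ ql + d₂ * deriv v₂ ql = 0) :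
    d₁ = ((1 + k) / 2 - ql) * (μ + CI / ρ)
        / (k * (1 - ql) ^ ((1 + k) / 2) * ql ^ ((1 - k) / 2))
    ∧ d₂ = -(((1 - k) / 2 - ql) * (μ + CI / ρ)
        / (k * (1 - ql) ^ ((1 - k) / 2) * ql ^ ((1 + k) / 2))) := by
  obtain ⟨hq0, hq1⟩ := hql
  have h1q : (0 : ℝ) < 1 - ql := by linarith
  have hhl : (0 : ℝ) < h - l := by linarith
  have hkpos : 0 < k := by
    rw [hk]
    apply Real.sqrt_pos.mpr
    positivity
  set a : ℝ := (1 - k) / 2 with ha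
  set b : ℝ := (1 + k) / 2 with hb
  set A : ℝ := ql ^ a with hA
  set B : ℝ := (1 - ql) ^ b with hB
  set C : ℝ := ql ^ b with hC
  set D : ℝ := (1 - ql) ^ a with hD
  have hApos : 0 < A := Real.rpow_pos_of_pos hq0 a
  have hBpos : 0 < B := Real.rpow_pos_of_pos h1q b
  have hCpos : 0 < C := Real.rpow_pos_of_pos hq0 b
  have hDpos : 0 < D := Real.rpow_pos_of_pos h1q a
  have hab : a + b = 1 := by rw [ha, hb]; ring
  have hAC : A * C = ql := by
    rw [hA, hC, ← Real.rpow_add hq0, hab, Real.rpow_one]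
  have hBD : B * D = 1 - ql := by
    have hba' : b + a = 1 := by rw [ha, hb]; ring
    rw [hB, hD, ← Real.rpow_add h1q, hba', Real.rpow_one]
  -- exponent shifts
  have hqa1 : ql ^ (a - 1) = C⁻¹ := by
    have : a - 1 = -b := by rw [ha, hb]; ring
    rw [this, Real.rpow_neg hq0.le, hC]
  have hqb1 : ql ^ (b - 1) = A⁻¹ := by
    have : b - 1 = -a := by rw [ha, hb]; ring
    rw [this, Real.rpow_neg hq0.le, hA]
  have hpb1 : (1 - ql) ^ (b - 1) = D⁻¹ := by
    have : b - 1 = -a := by rw [ha, hb]; ring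
    rw [this, Real.rpow_neg h1q.le, hD]
  have hpa1 : (1 - ql) ^ (a - 1) = B⁻¹ := by
    have : a - 1 = -b := by rw [ha, hb]; ring
    rw [this, Real.rpow_neg h1q.le, hB]
  -- derivatives
  have hv₁eq : v₁ = fun q : ℝ => q ^ a * (1 - q) ^ b := funext hv₁
  have hv₂eq : v₂ = fun q : ℝ => q ^ b * (1 - q) ^ a := funext hv₂
  have eC : C⁻¹ * C = 1 := inv_mul_cancel₀ hCpos.ne'
  have eD : D⁻¹ * D = 1 := inv_mul_cancel₀ hDpos.ne'
  have eA : A⁻¹ * A = 1 := inv_mul_cancel₀ hApos.ne'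
  have eB : B⁻¹ * B = 1 := inv_mul_cancel₀ hBpos.ne'
  have hd1 : deriv v₁ ql = (a - ql) / (C * D) := by
    rw [hv₁eq, (rpow_prod_hasDerivAt a b ql hq0 hq1).deriv, hqa1, hpb1]
    rw [eq_div_iff (by positivity : C * D ≠ 0)]
    linear_combination (a * B * D) * eC + (-(b * A * C)) * eD + a * hBD
      + (-b) * hAC + (-ql) * hab
  have hd2 : deriv v₂ ql = (b - ql) / (A * B) := by
    rw [hv₂eq, (rpow_prod_hasDerivAt b a ql hq0 hq1).deriv, hqb1, hpa1]
    rw [eq_div_iff (by positivity : A * B ≠ 0)]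
    linear_combination (b * D * B) * eA + (-(a * C * A)) * eB + b * hBD
      + (-a) * hAC + (-ql) * hab
  rw [hv₁ ql, hv₂ ql, ← hA, ← hB, ← hC, ← hD] at hfit1
  rw [hd1, hd2] at hfit2
  have hfit2' : d₁ * (a - ql) * (A * B) + d₂ * (b - ql) * (C * D) = 0 := by
    have h1 : (C * D : ℝ) ≠ 0 := by positivity
    have h2 : (A * B : ℝ) ≠ 0 := by positivity
    field_simp at hfit2
    linarith [hfit2]
  have hM : d₁ * (A * B) + d₂ * (C * D) = μ + CI / ρ := by linarith
  have hba : b - a = k := by rw [ha, hb]; ring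
  constructor
  · rw [eq_div_iff (by positivity : k * B * A ≠ 0)]
    have key : d₁ * (A * B) * k = (b - ql) * (μ + CI / ρ) := by
      calc d₁ * (A * B) * k = d₁ * (A * B) * (b - a) := by rw [hba]
        _ = (b - ql) * (d₁ * (A * B) + d₂ * (C * D)) := by linear_combination -hfit2'
        _ = (b - ql) * (μ + CI / ρ) := by rw [hM]
    linear_combination key
  · rw [← neg_div, eq_div_iff (by positivity : k * D * C ≠ 0)]
    have key : d₂ * (C * D) * k = -((a - ql) * (μ + CI / ρ)) := by
      calc d₂ * (C * D) * k = d₂ * (C * D) * (b - a) := by rw [hba]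
        _ = -((a - ql) * (d₁ * (A * B) + d₂ * (C * D))) := by linear_combination hfit2'
        _ = -((a - ql) * (μ + CI / ρ)) := by rw [hM]
    linear_combination key
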